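/- One has t_0 = 0 and t_1 = 1/π. -/

import Mathlib

open Real

/-- The summand `a_{j,k} = (-π²/4)^k / (2j+2k)! · C(j+k, j)`. -/
noncomputable def a (j k : ℕ) : ℝ :=
  (-(π ^ 2) / 4) ^ k / (Nat.factorial (2 * j + 2 * k)) * (Nat.choose (j + k) j)

/-- `t_j = Σ_{k=0}^∞ a_{j,k}`. -/
noncomputable def t (j : ℕ) : ℝ := ∑' k : ℕ, a j k

lemma neg_pisq_pow (k : ℕ) : (-(π ^ 2) / 4 : ℝ) ^ k = (-1) ^ k * (π/2) ^ (2*k) := by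
  rw [show (-(π ^ 2) / 4 : ℝ) = (-1) * (π/2)^2 by ring, mul_pow, ← pow_mul]

/-- `t_0 = 0` and `t_1 = 1/π`. -/
theorem t_zero_and_t_one : t 0 = 0 ∧ t 1 = 1 / π := by
  constructor
  · have h : t 0 = Real.cos (π/2) := by
      rw [Real.cos_eq_tsum]
      unfold t
      congr 1
      ext k
      simp [a, neg_pisq_pow, div_mul_eq_mul_div]
    rw [h, Real.cos_pi_div_two]
  · have h : t 1 = (1/π) * Real.sin (π/2) := by
      rw [Real.sin_eq_tsum, ← tsum_mul_left]
      unfold t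
      congr 1
      ext k
      have hfac : ((2 * 1 + 2 * k).factorial : ℝ) = (2*k+2) * (2*k+1).factorial := by
        have : 2 * 1 + 2 * k = (2*k+1) + 1 := by ring
        rw [this, Nat.factorial_succ]
        push_cast
        ring
      have hπ : (π : ℝ) ≠ 0 := Real.pi_ne_zero
      have hf : ((2*k+1).factorial : ℝ) ≠ 0 := by positivity
      simp only [a, neg_pisq_pow, Nat.choose_one_right, hfac]
      have hpow : (π/2 : ℝ) ^ (2*k+1) = (π/2) ^ (2*k) * (π/2) := by ring
      field_simp
      push_cast
      ring
    rw [h, Real.sin_pi_div_two, mul_one]
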